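/- For all real numbers x, y with 0 ≤ x ≤ y ≤ ℓ, the probability that the random interval [I, S] does not intersect [x, y] equals (1/ℓ)·(ℓ − (y − x) − (r/2)·(2 − e^{−2(ℓ−y)/r} − e^{−2x/r})). -/

import Mathlib

open MeasureTheory ProbabilityTheory

/-- The uniform probability measure on `[0,ℓ]` (normalized Lebesgue measure). -/
noncomputable def unifMeasure (ℓ : ℝ) : Measure ℝ :=
  ProbabilityTheory.cond volume (Set.Icc 0 ℓ)

section helpers
open Real Set

lemma expIio (t : ℝ) :
    expMeasure 1 (Set.Iio t) = ENNReal.ofReal (if 0 ≤ t then 1 - Real.exp (-t) else 0) := by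
  rw [expMeasure, gammaMeasure, withDensity_apply _ measurableSet_Iio]
  have h1 : ∫⁻ y in Set.Iio t, gammaPDF 1 1 y = ∫⁻ y in Set.Iic t, exponentialPDF 1 y := by
    rw [setLIntegral_congr Iio_ae_eq_Iic]
    rfl
  rw [h1, lintegral_exponentialPDF_eq_antiDeriv one_pos]
  simp [one_mul]

lemma realA {c : ℝ} (hc : 0 < c) (x : ℝ) :
    ∫ u in (0:ℝ)..x, (1 - Real.exp (-((x - u)/c))) = x - c + c * Real.exp (-(x/c)) := by
  have key : ∀ t : ℝ, HasDerivAt (fun u => u - c * Real.exp (-((x - u)/c)))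
      (1 - Real.exp (-((x - t)/c))) t := by
    intro t
    have h1 : HasDerivAt (fun u : ℝ => -((x - u)/c)) (1/c) t := by
      have h : HasDerivAt (fun u : ℝ => (u - x)/c) (1/c) t :=
        ((hasDerivAt_id t).sub_const x).div_const c
      have heq : (fun u : ℝ => -((x - u)/c)) = (fun u : ℝ => (u - x)/c) := by funext u; ring
      rw [heq]; exact h
    have h3 := (hasDerivAt_id t).sub (h1.exp.const_mul c)
    refine h3.congr_deriv ?_
    field_simp
  rw [intervalIntegral.integral_eq_sub_of_hasDerivAt (fun t _ => key t)
    (Continuous.intervalIntegrable (by fun_prop) 0 x)]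
  simp only [sub_self, zero_div, neg_zero, Real.exp_zero, sub_zero, mul_one, id_eq]
  ring

lemma realB {c : ℝ} (hc : 0 < c) (y b : ℝ) :
    ∫ u in y..b, (1 - Real.exp (-((u - y)/c))) = (b - y) - c + c * Real.exp (-((b - y)/c)) := by
  have key : ∀ t : ℝ, HasDerivAt (fun u => u + c * Real.exp (-((u - y)/c)))
      (1 - Real.exp (-((t - y)/c))) t := by
    intro t
    have h1 : HasDerivAt (fun u : ℝ => -((u - y)/c)) (-1/c) t := by
      have h : HasDerivAt (fun u : ℝ => (y - u)/c) (-1/c) t :=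
        ((hasDerivAt_id t).const_sub y).div_const c
      have heq : (fun u : ℝ => -((u - y)/c)) = (fun u : ℝ => (y - u)/c) := by funext u; ring
      rw [heq]; exact h
    have h3 := (hasDerivAt_id t).add (h1.exp.const_mul c)
    refine h3.congr_deriv ?_
    field_simp
    ring
  rw [intervalIntegral.integral_eq_sub_of_hasDerivAt (fun t _ => key t)
    (Continuous.intervalIntegrable (by fun_prop) y b)]
  simp only [sub_self, zero_div, neg_zero, Real.exp_zero, mul_one, id_eq]
  ring

lemma Gbounds {c : ℝ} (hc : 0 < c) (v : ℝ) :
    0 ≤ (if 0 ≤ v/c then 1 - Real.exp (-(v/c)) else 0) ∧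
    (if 0 ≤ v/c then 1 - Real.exp (-(v/c)) else 0) ≤ 1 := by
  by_cases h : 0 ≤ v/c <;> simp only [h, if_true, if_false] <;> norm_num
  constructor
  · have : Real.exp (-(v/c)) ≤ Real.exp 0 := Real.exp_le_exp.mpr (by linarith)
    rw [Real.exp_zero] at this; linarith
  · linarith [Real.exp_pos (-(v/c))]

lemma intG {c : ℝ} (hc : 0 < c) {a b : ℝ} (hab : a ≤ b) (f : ℝ → ℝ) (hf : Measurable f) :
    IntegrableOn (fun u => if 0 ≤ f u / c then 1 - Real.exp (-(f u / c)) else 0)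
      (Set.Icc a b) volume := by
  have hm : Measurable (fun u => if 0 ≤ f u / c then 1 - Real.exp (-(f u / c)) else 0) := by
    apply Measurable.ite (measurableSet_le measurable_const (hf.div_const c))
    · fun_prop
    · exact measurable_const
  refine Integrable.mono' (integrable_const 1) hm.aestronglyMeasurable (ae_of_all _ fun u => ?_)
  rw [Real.norm_eq_abs, abs_le]
  constructor
  · linarith [(Gbounds hc (f u)).1]
  · exact (Gbounds hc (f u)).2

lemma lintA {c : ℝ} (hc : 0 < c) {b x : ℝ} (hx : 0 ≤ x) (hxb : x ≤ b) :
    ∫⁻ u in Set.Icc 0 b, ENNReal.ofReal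
        (if 0 ≤ (x - u)/c then 1 - Real.exp (-((x - u)/c)) else 0)
      = ENNReal.ofReal (x - c + c * Real.exp (-(x/c))) := by
  have hInt := intG hc (le_trans hx hxb) (fun u => x - u) (by fun_prop)
  rw [← ofReal_integral_eq_lintegral_ofReal hInt
    (ae_of_all _ fun u => (Gbounds hc (x - u)).1)]
  congr 1
  have hsplit : Set.Icc (0:ℝ) b = Set.Icc 0 x ∪ Set.Ioc x b :=
    (Set.Icc_union_Ioc_eq_Icc hx hxb).symm
  rw [hsplit, setIntegral_union ((Set.Iic_disjoint_Ioc le_rfl).mono Set.Icc_subset_Iic_self le_rfl) measurableSet_Ioc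
    (hInt.mono_set (by rw [hsplit]; exact Set.subset_union_left))
    (hInt.mono_set (by rw [hsplit]; exact Set.subset_union_right))]
  have h2 : ∫ u in Set.Ioc x b,
      (if 0 ≤ (x - u)/c then 1 - Real.exp (-((x - u)/c)) else 0) = 0 := by
    rw [setIntegral_congr_fun measurableSet_Ioc (g := fun _ => (0:ℝ))
      (fun u hu => if_neg (not_le.mpr (div_neg_of_neg_of_pos (by linarith [hu.1]) hc)))]
    simp
  have h1 : ∫ u in Set.Icc 0 x,
      (if 0 ≤ (x - u)/c then 1 - Real.exp (-((x - u)/c)) else 0)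
      = ∫ u in Set.Icc 0 x, (1 - Real.exp (-((x - u)/c))) :=
    setIntegral_congr_fun measurableSet_Icc
      (fun u hu => if_pos (div_nonneg (by linarith [hu.2]) hc.le))
  rw [h1, h2, add_zero, integral_Icc_eq_integral_Ioc,
    ← intervalIntegral.integral_of_le hx, realA hc]

lemma lintB {c : ℝ} (hc : 0 < c) {b y : ℝ} (hy : 0 ≤ y) (hyb : y ≤ b) :
    ∫⁻ u in Set.Icc 0 b, ENNReal.ofReal
        (if 0 ≤ (u - y)/c then 1 - Real.exp (-((u - y)/c)) else 0)
      = ENNReal.ofReal ((b - y) - c + c * Real.exp (-((b - y)/c))) := by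
  have hInt := intG hc (le_trans hy hyb) (fun u => u - y) (by fun_prop)
  rw [← ofReal_integral_eq_lintegral_ofReal hInt
    (ae_of_all _ fun u => (Gbounds hc (u - y)).1)]
  congr 1
  have hsplit : Set.Icc (0:ℝ) b = Set.Ico 0 y ∪ Set.Icc y b :=
    (Set.Ico_union_Icc_eq_Icc hy hyb).symm
  rw [hsplit, setIntegral_union ((Set.Iio_disjoint_Ici le_rfl).mono Set.Ico_subset_Iio_self Set.Icc_subset_Ici_self) measurableSet_Icc
    (hInt.mono_set (by rw [hsplit]; exact Set.subset_union_left))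
    (hInt.mono_set (by rw [hsplit]; exact Set.subset_union_right))]
  have h2 : ∫ u in Set.Ico 0 y,
      (if 0 ≤ (u - y)/c then 1 - Real.exp (-((u - y)/c)) else 0) = 0 := by
    rw [setIntegral_congr_fun measurableSet_Ico (g := fun _ => (0:ℝ))
      (fun u hu => if_neg (not_le.mpr (div_neg_of_neg_of_pos (by linarith [hu.2]) hc)))]
    simp
  have h1 : ∫ u in Set.Icc y b,
      (if 0 ≤ (u - y)/c then 1 - Real.exp (-((u - y)/c)) else 0)
      = ∫ u in Set.Icc y b, (1 - Real.exp (-((u - y)/c))) :=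
    setIntegral_congr_fun measurableSet_Icc
      (fun u hu => if_pos (div_nonneg (by linarith [hu.1]) hc.le))
  rw [h1, h2, zero_add, integral_Icc_eq_integral_Ioc,
    ← intervalIntegral.integral_of_le hyb, realB hc]

end helpers

/-- Fix `ℓ > 0` and `r > 0`. Let `U` be uniform on `[0,ℓ]` and `E` an independent
exponential variable with rate 1; set `I = U − (r/2)E` and `S = U + (r/2)E`. For all
`0 ≤ x ≤ y ≤ ℓ`, the probability that `[I,S]` does not intersect `[x,y]` equals
`(1/ℓ)·(ℓ − (y − x) − (r/2)·(2 − e^{−2(ℓ−y)/r} − e^{−2x/r}))`. -/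
theorem stmt_2 {Ω : Type*} [MeasurableSpace Ω] (μ : Measure Ω) [IsProbabilityMeasure μ]
    (ℓ r : ℝ) (hℓ : 0 < ℓ) (hr : 0 < r)
    (U E : Ω → ℝ) (hU : Measurable U) (hE : Measurable E)
    (hUdist : Measure.map U μ = unifMeasure ℓ)
    (hEdist : Measure.map E μ = expMeasure 1)
    (hind : IndepFun U E μ)
    (x y : ℝ) (hx : 0 ≤ x) (hxy : x ≤ y) (hyℓ : y ≤ ℓ) :
    μ {ω | Set.Icc (U ω - r / 2 * E ω) (U ω + r / 2 * E ω) ∩ Set.Icc x y = ∅}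
      = ENNReal.ofReal ((1 / ℓ) *
          (ℓ - (y - x) - (r / 2) *
            (2 - Real.exp (-(2 * (ℓ - y)) / r) - Real.exp (-(2 * x) / r)))) := by
  have hc : (0:ℝ) < r / 2 := by linarith
  haveI : IsProbabilityMeasure (expMeasure 1) := isProbabilityMeasure_expMeasure one_pos
  set c : ℝ := r / 2 with hcdef
  set A : Set Ω := {ω | U ω + c * E ω < x} with hA
  set B : Set Ω := {ω | y < U ω - c * E ω} with hB
  have hAm : MeasurableSet A := measurableSet_lt (hU.add (hE.const_mul c)) measurable_const
  have hBm : MeasurableSet B := measurableSet_lt measurable_const (hU.sub (hE.const_mul c))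
  have hE0 : μ {ω | E ω < 0} = 0 := by
    have h0 : {ω | E ω < 0} = E ⁻¹' Set.Iio 0 := rfl
    rw [h0, ← Measure.map_apply hE measurableSet_Iio, hEdist, expIio]
    simp
  have hEae : ∀ᵐ ω ∂μ, 0 ≤ E ω := by
    rw [ae_iff]
    simpa [not_le] using hE0
  have hset : {ω | Set.Icc (U ω - c * E ω) (U ω + c * E ω) ∩ Set.Icc x y = ∅} =ᵐ[μ] ((A ∪ B : Set Ω) : Set Ω) := by
    rw [Filter.eventuallyEq_set]
    filter_upwards [hEae] with ω hω
    have hce : 0 ≤ c * E ω := mul_nonneg hc.le hω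
    simp only [Set.mem_setOf_eq, Set.mem_union, hA, hB]
    constructor
    · intro h
      by_contra hcon
      push_neg at hcon
      obtain ⟨h1, h2⟩ := hcon
      rw [Set.Icc_inter_Icc, Set.Icc_eq_empty_iff] at h
      exact h (max_le (le_min (by linarith) (by linarith)) (le_min h1 (by linarith)))
    · intro h
      rw [Set.Icc_inter_Icc, Set.Icc_eq_empty_iff]
      intro hcon
      rcases h with h | h
      · have h3 := le_trans (le_trans (le_max_right (U ω - c * E ω) x) hcon)
          (min_le_left (U ω + c * E ω) y)
        linarith
      · have h3 := le_trans (le_trans (le_max_left (U ω - c * E ω) x) hcon)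
          (min_le_right (U ω + c * E ω) y)
        linarith
  have hdis : AEDisjoint μ A B := by
    refine measure_mono_null (fun ω hω => ?_) hE0
    obtain ⟨h1, h2⟩ := hω
    simp only [hA, hB, Set.mem_setOf_eq] at h1 h2
    show E ω < 0
    nlinarith
  rw [measure_congr hset, measure_union₀ hBm.nullMeasurableSet hdis]
  have hmap : Measure.map (fun ω => (U ω, E ω)) μ = (unifMeasure ℓ).prod (expMeasure 1) := by
    rw [← hUdist, ← hEdist]
    exact (indepFun_iff_map_prod_eq_prod_map_map hU.aemeasurable hE.aemeasurable).mp hind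
  have hSA : MeasurableSet {p : ℝ × ℝ | p.1 + c * p.2 < x} :=
    measurableSet_lt (measurable_fst.add (measurable_snd.const_mul c)) measurable_const
  have hSB : MeasurableSet {p : ℝ × ℝ | y < p.1 - c * p.2} :=
    measurableSet_lt measurable_const (measurable_fst.sub (measurable_snd.const_mul c))
  have hmuA : μ A = (ENNReal.ofReal ℓ)⁻¹
      * ENNReal.ofReal (x - c + c * Real.exp (-(x / c))) := by
    have h1 : μ A = ((unifMeasure ℓ).prod (expMeasure 1)) {p : ℝ × ℝ | p.1 + c * p.2 < x} := by
      rw [← hmap, Measure.map_apply (hU.prodMk hE) hSA]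
      rfl
    rw [h1, Measure.prod_apply hSA]
    have h2 : ∫⁻ u, expMeasure 1 (Prod.mk u ⁻¹' {p : ℝ × ℝ | p.1 + c * p.2 < x})
          ∂(unifMeasure ℓ)
        = ∫⁻ u, ENNReal.ofReal
            (if 0 ≤ (x - u) / c then 1 - Real.exp (-((x - u) / c)) else 0) ∂(unifMeasure ℓ) := by
      refine lintegral_congr fun u => ?_
      have hpre : (Prod.mk u ⁻¹' {p : ℝ × ℝ | p.1 + c * p.2 < x}) = Set.Iio ((x - u) / c) := by
        ext e
        simp only [Set.mem_preimage, Set.mem_setOf_eq, Set.mem_Iio]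
        rw [lt_div_iff₀ hc]
        constructor <;> intro h <;> nlinarith
      rw [hpre, expIio]
    rw [h2, unifMeasure, ProbabilityTheory.cond, lintegral_smul_measure, Real.volume_Icc,
      sub_zero, lintA hc hx (le_trans hxy hyℓ), smul_eq_mul]
  have hmuB : μ B = (ENNReal.ofReal ℓ)⁻¹
      * ENNReal.ofReal ((ℓ - y) - c + c * Real.exp (-((ℓ - y) / c))) := by
    have h1 : μ B = ((unifMeasure ℓ).prod (expMeasure 1)) {p : ℝ × ℝ | y < p.1 - c * p.2} := by
      rw [← hmap, Measure.map_apply (hU.prodMk hE) hSB]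
      rfl
    rw [h1, Measure.prod_apply hSB]
    have h2 : ∫⁻ u, expMeasure 1 (Prod.mk u ⁻¹' {p : ℝ × ℝ | y < p.1 - c * p.2})
          ∂(unifMeasure ℓ)
        = ∫⁻ u, ENNReal.ofReal
            (if 0 ≤ (u - y) / c then 1 - Real.exp (-((u - y) / c)) else 0) ∂(unifMeasure ℓ) := by
      refine lintegral_congr fun u => ?_
      have hpre : (Prod.mk u ⁻¹' {p : ℝ × ℝ | y < p.1 - c * p.2}) = Set.Iio ((u - y) / c) := by
        ext e
        simp only [Set.mem_preimage, Set.mem_setOf_eq, Set.mem_Iio]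
        rw [lt_div_iff₀ hc]
        constructor <;> intro h <;> nlinarith
      rw [hpre, expIio]
    rw [h2, unifMeasure, ProbabilityTheory.cond, lintegral_smul_measure, Real.volume_Icc,
      sub_zero, lintB hc (le_trans hx hxy) hyℓ, smul_eq_mul]
  have hP1 : 0 ≤ x - c + c * Real.exp (-(x / c)) := by
    have h := Real.add_one_le_exp (-(x / c))
    have h2 : c * (x / c) = x := by field_simp
    nlinarith
  have hP2 : 0 ≤ (ℓ - y) - c + c * Real.exp (-((ℓ - y) / c)) := by
    have h := Real.add_one_le_exp (-((ℓ - y) / c))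
    have h2 : c * ((ℓ - y) / c) = ℓ - y := by field_simp
    nlinarith
  rw [hmuA, hmuB, ← ENNReal.ofReal_inv_of_pos hℓ,
    ← ENNReal.ofReal_mul (by positivity : (0:ℝ) ≤ ℓ⁻¹),
    ← ENNReal.ofReal_mul (by positivity : (0:ℝ) ≤ ℓ⁻¹),
    ← ENNReal.ofReal_add (mul_nonneg (by positivity) hP1) (mul_nonneg (by positivity) hP2)]
  congr 1
  have e1 : -(2 * x) / r = -(x / c) := by
    rw [hcdef]
    field_simp
  have e2 : -(2 * (ℓ - y)) / r = -((ℓ - y) / c) := by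
    rw [hcdef]
    field_simp
  rw [e1, e2, hcdef]
  field_simp
  ring
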